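/- Let H and Ĥ be symmetric matrices with ‖Ĥ - H‖₂ ≤ ε M and with the minimum nonzero eigenvalue of Ĥ at least η - εM > 0. Then for any vector g, ⟨Hg, Ĥ†g⟩ ≥ ‖Ûᵀg‖² - (εM/(η - εM))‖g‖², where Û is an orthonormal basis of the range of Ĥ. -/

import Mathlib

open Matrix BigOperators

private lemma dot_mv' {a b : ℕ} (M : Matrix (Fin a) (Fin b) ℝ) (x : Fin b → ℝ) (y : Fin a → ℝ) :
    (M *ᵥ x) ⬝ᵥ y = x ⬝ᵥ (Mᵀ *ᵥ y) := by
  rw [dotProduct_comm, Matrix.dotProduct_mulVec, dotProduct_comm,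
    Matrix.mulVec_transpose]

private lemma dot_cs' {d : ℕ} (a b : Fin d → ℝ) :
    a ⬝ᵥ b ≤ Real.sqrt (∑ j, a j ^ 2) * Real.sqrt (∑ j, b j ^ 2) := by
  simpa [dotProduct] using Real.sum_mul_le_sqrt_mul_sqrt Finset.univ a b

private lemma dps' {d : ℕ} (x : Fin d → ℝ) : x ⬝ᵥ x = ∑ j, x j ^ 2 := by
  simp [dotProduct, sq]

private lemma parseval' {d : ℕ} (b : OrthonormalBasis (Fin d) ℝ (EuclideanSpace ℝ (Fin d)))
    (v : Fin d → ℝ) : ∑ j, v j ^ 2 = ∑ i, (⇑(b i) ⬝ᵥ v) ^ 2 := by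
  have key : ∀ w : EuclideanSpace ℝ (Fin d), ‖w‖ ^ 2 = ∑ i, w i ^ 2 := by
    intro w
    rw [EuclideanSpace.norm_eq, Real.sq_sqrt (by positivity)]
    simp [sq_abs]
  set V : EuclideanSpace ℝ (Fin d) := WithLp.toLp 2 v with hV
  have h1 : ∑ j, v j ^ 2 = ‖V‖ ^ 2 := (key V).symm
  have h2 : ‖V‖ = ‖b.repr V‖ := (b.repr.norm_map V).symm
  rw [h1, h2, key]
  refine Finset.sum_congr rfl fun i _ => ?_
  congr 1
  rw [b.repr_apply_apply]
  simp only [PiLp.inner_apply, RCLike.inner_apply, starRingEnd_apply, star_trivial]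
  rw [dotProduct]; exact Finset.sum_congr rfl fun j _ => mul_comm _ _

private lemma eig_lower' {d : ℕ} {Hh : Matrix (Fin d) (Fin d) ℝ} (hHh : Hh.PosSemidef)
    {lam : ℝ} (hlam : 0 < lam)
    (heig : ∀ (μ : ℝ) (v : Fin d → ℝ), v ≠ 0 → Hh.mulVec v = μ • v → μ ≠ 0 → lam ≤ μ)
    (x : Fin d → ℝ) (hx : ∃ y, Hh.mulVec y = x) :
    lam * Real.sqrt (∑ j, x j ^ 2) ≤ Real.sqrt (∑ j, (Hh.mulVec x) j ^ 2) := by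
  have hsym := hHh.1
  set b := hsym.eigenvectorBasis with hb
  have htr : Hhᵀ = Hh := by
    rw [← Matrix.conjTranspose_eq_transpose_of_trivial]; exact hsym
  have hmv : ∀ (i : Fin d) (v : Fin d → ℝ),
      ⇑(b i) ⬝ᵥ (Hh *ᵥ v) = hsym.eigenvalues i * (⇑(b i) ⬝ᵥ v) := by
    intro i v
    have h1 : (Hh *ᵥ ⇑(b i)) ⬝ᵥ v = ⇑(b i) ⬝ᵥ (Hh *ᵥ v) := by
      rw [dot_mv', htr]
    rw [← h1, hsym.mulVec_eigenvectorBasis, smul_dotProduct, smul_eq_mul]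
  obtain ⟨y, hy⟩ := hx
  have hzero : ∀ i, hsym.eigenvalues i = 0 → ⇑(b i) ⬝ᵥ x = 0 := by
    intro i hi
    rw [← hy, hmv, hi, zero_mul]
  have hsq : lam ^ 2 * (∑ j, x j ^ 2) ≤ ∑ j, (Hh.mulVec x) j ^ 2 := by
    rw [parseval' b x, parseval' b (Hh.mulVec x), Finset.mul_sum]
    refine Finset.sum_le_sum fun i _ => ?_
    rw [show Hh.mulVec x = Hh *ᵥ x from rfl, hmv, mul_pow]
    rcases eq_or_ne (⇑(b i) ⬝ᵥ x) 0 with h | h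
    · simp [h]
    · have hne : hsym.eigenvalues i ≠ 0 := fun h0 => h (hzero i h0)
      have hge : lam ≤ hsym.eigenvalues i :=
        heig _ _ (fun h0 => b.orthonormal.ne_zero i (by rw [hb, ← WithLp.toLp_ofLp (x := hsym.eigenvectorBasis i), h0, WithLp.toLp_zero])) (hsym.mulVec_eigenvectorBasis i) hne
      have : lam ^ 2 ≤ hsym.eigenvalues i ^ 2 := by nlinarith
      exact mul_le_mul_of_nonneg_right this (sq_nonneg _)
  calc lam * Real.sqrt (∑ j, x j ^ 2)
      = Real.sqrt (lam ^ 2 * ∑ j, x j ^ 2) := by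
        rw [Real.sqrt_mul (sq_nonneg _), Real.sqrt_sq hlam.le]
    _ ≤ _ := Real.sqrt_le_sqrt hsq

private lemma keyQR' {d r : ℕ}
    (Hh P : Matrix (Fin d) (Fin d) ℝ)
    (h1 : Hh * P * Hh = Hh)
    (h3 : (Hh * P)ᵀ = Hh * P)
    (Uh : Matrix (Fin d) (Fin r) ℝ) (hUh : Uhᵀ * Uh = 1)
    (hrange : ∀ x : Fin d → ℝ, (∃ y, Hh.mulVec y = x) ↔ ∃ c, Uh.mulVec c = x) :
    ∀ x : Fin d → ℝ, (Hh*P) *ᵥ x = Uh *ᵥ (Uhᵀ *ᵥ x) := by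
  have fixQ : ∀ z : Fin d → ℝ, (∃ y, Hh *ᵥ y = z) → (Hh*P) *ᵥ z = z := by
    rintro z ⟨y, rfl⟩
    rw [Matrix.mulVec_mulVec, mul_assoc, ← mul_assoc, h1]
  have fixR : ∀ z : Fin d → ℝ, (∃ c, Uh *ᵥ c = z) → Uh *ᵥ (Uhᵀ *ᵥ z) = z := by
    rintro z ⟨c, rfl⟩
    rw [Matrix.mulVec_mulVec, Matrix.mulVec_mulVec, Matrix.mul_assoc, hUh, Matrix.mul_one]
  have hRQ : ∀ x, Uh *ᵥ (Uhᵀ *ᵥ ((Hh*P) *ᵥ x)) = (Hh*P) *ᵥ x := by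
    intro x
    refine fixR _ ((hrange _).1 ⟨P *ᵥ x, ?_⟩)
    rw [Matrix.mulVec_mulVec]
  have hQR : ∀ x, (Hh*P) *ᵥ (Uh *ᵥ (Uhᵀ *ᵥ x)) = Uh *ᵥ (Uhᵀ *ᵥ x) := by
    intro x
    exact fixQ _ ((hrange _).2 ⟨Uhᵀ *ᵥ x, rfl⟩)
  have Qsym : ∀ x y : Fin d → ℝ, ((Hh*P) *ᵥ x) ⬝ᵥ y = x ⬝ᵥ ((Hh*P) *ᵥ y) := by
    intro x y; rw [dot_mv', h3]
  have Rsym : ∀ x y : Fin d → ℝ, (Uh *ᵥ (Uhᵀ *ᵥ x)) ⬝ᵥ y = x ⬝ᵥ (Uh *ᵥ (Uhᵀ *ᵥ y)) := by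
    intro x y
    rw [Matrix.mulVec_mulVec, Matrix.mulVec_mulVec, dot_mv']
    congr 1
    rw [Matrix.transpose_mul, Matrix.transpose_transpose]
  intro x
  have key : ∀ y : Fin d → ℝ, ((Hh*P) *ᵥ x) ⬝ᵥ y = (Uh *ᵥ (Uhᵀ *ᵥ x)) ⬝ᵥ y := by
    intro y
    calc ((Hh*P) *ᵥ x) ⬝ᵥ y = x ⬝ᵥ ((Hh*P) *ᵥ y) := Qsym x y
      _ = x ⬝ᵥ (Uh *ᵥ (Uhᵀ *ᵥ ((Hh*P) *ᵥ y))) := by rw [hRQ]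
      _ = (Uh *ᵥ (Uhᵀ *ᵥ x)) ⬝ᵥ ((Hh*P) *ᵥ y) := (Rsym x _).symm
      _ = ((Hh*P) *ᵥ (Uh *ᵥ (Uhᵀ *ᵥ x))) ⬝ᵥ y := by
            rw [Qsym, dotProduct_comm, Qsym, dotProduct_comm]
      _ = (Uh *ᵥ (Uhᵀ *ᵥ x)) ⬝ᵥ y := by rw [hQR]
  have hz : ((Hh*P) *ᵥ x - Uh *ᵥ (Uhᵀ *ᵥ x)) ⬝ᵥ ((Hh*P) *ᵥ x - Uh *ᵥ (Uhᵀ *ᵥ x)) = 0 := by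
    rw [sub_dotProduct, key, sub_self]
  exact sub_eq_zero.1 (dotProduct_self_eq_zero.1 hz)

/-- `⟨Hg, Ĥ†g⟩ ≥ ‖Ûᵀg‖² - (εM/(η-εM))‖g‖²` when `‖Ĥ-H‖₂ ≤ εM` and the
nonzero eigenvalues of PSD `Ĥ` are ≥ η - εM > 0, with `Û` an orthonormal basis of
range(Ĥ) and `Ĥ†` the Moore–Penrose pseudoinverse. -/
theorem stmt_9 {d r : ℕ} (ε M η : ℝ) (hε : 0 < ε) (hM : 0 < M)
    (hpos : 0 < η - ε * M)
    (H Hh P : Matrix (Fin d) (Fin d) ℝ)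
    (hHsym : H.IsHermitian) (hHh : Hh.PosSemidef)
    (hclose : ∀ x : Fin d → ℝ,
      Real.sqrt (∑ j, ((Hh - H).mulVec x) j ^ 2) ≤ ε * M * Real.sqrt (∑ j, x j ^ 2))
    (heig : ∀ (μ : ℝ) (v : Fin d → ℝ), v ≠ 0 → Hh.mulVec v = μ • v → μ ≠ 0 →
      η - ε * M ≤ μ)
    (h1 : Hh * P * Hh = Hh) (h2 : P * Hh * P = P)
    (h3 : (Hh * P)ᵀ = Hh * P) (h4 : (P * Hh)ᵀ = P * Hh)
    (Uh : Matrix (Fin d) (Fin r) ℝ) (hUh : Uhᵀ * Uh = 1)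
    (hrange : ∀ x : Fin d → ℝ, (∃ y, Hh.mulVec y = x) ↔ ∃ c, Uh.mulVec c = x) :
    ∀ g : Fin d → ℝ,
      ∑ j, (Uhᵀ.mulVec g) j ^ 2 - (ε * M / (η - ε * M)) * ∑ j, g j ^ 2 ≤
        (H.mulVec g) ⬝ᵥ (P.mulVec g) := by
  intro g
  set lam : ℝ := η - ε * M with hlam
  have hQR := keyQR' Hh P h1 h3 Uh hUh hrange
  have htr : Hhᵀ = Hh := by
    rw [← Matrix.conjTranspose_eq_transpose_of_trivial]; exact hHh.1
  set u : Fin r → ℝ := Uhᵀ *ᵥ g with hu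
  set w : Fin d → ℝ := Uh *ᵥ u with hw
  -- basic dot facts
  have e1 : u ⬝ᵥ u = g ⬝ᵥ w := by
    rw [hu, dot_mv', Matrix.transpose_transpose]
  have e2 : w ⬝ᵥ w = u ⬝ᵥ u := by
    rw [hw, dot_mv']
    congr 1
    rw [Matrix.mulVec_mulVec, hUh, Matrix.one_mulVec]
  have e3 : 0 ≤ (g - w) ⬝ᵥ (g - w) := by rw [dps']; positivity
  have e4 : (g - w) ⬝ᵥ (g - w) = g ⬝ᵥ g - 2 * (g ⬝ᵥ w) + w ⬝ᵥ w := by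
    rw [sub_dotProduct, dotProduct_sub, dotProduct_sub,
      dotProduct_comm w g]
    ring
  have hu_le_g : u ⬝ᵥ u ≤ g ⬝ᵥ g := by linarith [e3, e4, e1, e2]
  -- Term 1
  have hterm1 : (Hh *ᵥ g) ⬝ᵥ (P *ᵥ g) = u ⬝ᵥ u := by
    calc (Hh *ᵥ g) ⬝ᵥ (P *ᵥ g) = g ⬝ᵥ (Hhᵀ *ᵥ (P *ᵥ g)) := dot_mv' _ _ _
      _ = g ⬝ᵥ ((Hh * P) *ᵥ g) := by rw [htr, Matrix.mulVec_mulVec]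
      _ = g ⬝ᵥ w := by rw [hQR g, ← hu, ← hw]
      _ = u ⬝ᵥ u := e1.symm
  -- w is in the range of Hh
  have hwrange : ∃ y, Hh *ᵥ y = w := (hrange w).2 ⟨u, rfl⟩
  -- P *ᵥ g = P *ᵥ w
  have hbw : P *ᵥ g = P *ᵥ w := by
    have step : P *ᵥ ((Hh * P) *ᵥ g) = P *ᵥ g := by
      rw [Matrix.mulVec_mulVec, ← mul_assoc, h2]
    rw [← step, hQR g, ← hu, ← hw]
  -- P *ᵥ g is in the range of Hh
  have hPHh : P * Hh = Hh * Pᵀ := by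
    rw [← h4, Matrix.transpose_mul, htr]
  have hbrange : ∃ z, Hh *ᵥ z = P *ᵥ g := by
    obtain ⟨y, hy⟩ := hwrange
    refine ⟨Pᵀ *ᵥ y, ?_⟩
    rw [hbw, ← hy, Matrix.mulVec_mulVec, Matrix.mulVec_mulVec, ← hPHh]
  -- Hh *ᵥ (P *ᵥ g) = w
  have hHb : Hh *ᵥ (P *ᵥ g) = w := by
    rw [hbw, Matrix.mulVec_mulVec, hQR w, hw, Matrix.mulVec_mulVec, Matrix.mulVec_mulVec,
      Matrix.mul_assoc, hUh, Matrix.mul_one]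
  -- norm bounds
  have hSg : (0:ℝ) ≤ ∑ j, g j ^ 2 := by positivity
  have hsqrt_w_g : Real.sqrt (∑ j, w j ^ 2) ≤ Real.sqrt (∑ j, g j ^ 2) := by
    apply Real.sqrt_le_sqrt
    rw [← dps', ← dps', e2]
    exact hu_le_g
  have hPg_bound : Real.sqrt (∑ j, (P *ᵥ g) j ^ 2) ≤ Real.sqrt (∑ j, g j ^ 2) / lam := by
    rw [le_div_iff₀ hpos, mul_comm]
    calc lam * Real.sqrt (∑ j, (P *ᵥ g) j ^ 2)
        ≤ Real.sqrt (∑ j, (Hh *ᵥ (P *ᵥ g)) j ^ 2) :=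
          eig_lower' hHh hpos heig _ hbrange
      _ = Real.sqrt (∑ j, w j ^ 2) := by rw [hHb]
      _ ≤ Real.sqrt (∑ j, g j ^ 2) := hsqrt_w_g
  -- error term bound
  have herr : ((Hh - H) *ᵥ g) ⬝ᵥ (P *ᵥ g) ≤ ε * M / lam * ∑ j, g j ^ 2 := by
    calc ((Hh - H) *ᵥ g) ⬝ᵥ (P *ᵥ g)
        ≤ Real.sqrt (∑ j, ((Hh - H) *ᵥ g) j ^ 2) * Real.sqrt (∑ j, (P *ᵥ g) j ^ 2) :=
          dot_cs' _ _
      _ ≤ (ε * M * Real.sqrt (∑ j, g j ^ 2)) * (Real.sqrt (∑ j, g j ^ 2) / lam) := by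
          apply mul_le_mul (hclose g) hPg_bound (Real.sqrt_nonneg _)
          positivity
      _ = ε * M / lam * (Real.sqrt (∑ j, g j ^ 2) * Real.sqrt (∑ j, g j ^ 2)) := by ring
      _ = ε * M / lam * ∑ j, g j ^ 2 := by rw [Real.mul_self_sqrt hSg]
  -- assemble
  have hsplit : (H *ᵥ g) ⬝ᵥ (P *ᵥ g)
      = (Hh *ᵥ g) ⬝ᵥ (P *ᵥ g) - ((Hh - H) *ᵥ g) ⬝ᵥ (P *ᵥ g) := by
    rw [Matrix.sub_mulVec, sub_dotProduct]
    ring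
  have hgoal : ∑ j, (Uhᵀ.mulVec g) j ^ 2 = u ⬝ᵥ u := (dps' u).symm
  rw [hgoal, hsplit, hterm1]
  linarith [herr]
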